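/- For every complex number z not on the negative real axis and every nonnegative real number λ, one has |λ + z| ≥ (λ + |z|)^{1/2} · Re(√z), where √z denotes the principal branch of the square root. -/

import Mathlib

/-- For every complex number `z` not on the negative real axis and every nonnegative
real `l`, one has `|l + z| ≥ (l + |z|)^(1/2) * Re (√z)`, where `√z = z ^ (1/2 : ℂ)`
is the principal branch of the square root. -/
theorem abs_add_ge_sqrt_mul_re_sqrt (z : ℂ) (hz : ¬ (z.re ≤ 0 ∧ z.im = 0))
    (l : ℝ) (hl : 0 ≤ l) :
    Real.sqrt (l + ‖z‖) * (z ^ (1/2 : ℂ)).re ≤ ‖(↑l + z : ℂ)‖ := by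
  have h12 : (1/2 : ℂ) = (2⁻¹ : ℂ) := by norm_num
  rw [h12, Complex.cpow_inv_two_re]
  set r := ‖z‖ with hr
  have hxr : |z.re| ≤ r := Complex.abs_re_le_norm z
  have hr0 : 0 ≤ r := norm_nonneg z
  have hsq : z.re ^ 2 + z.im ^ 2 = r ^ 2 := by
    rw [hr, Complex.sq_norm, Complex.normSq_apply]; ring
  rw [← Real.sqrt_mul (by linarith [abs_nonneg z.re, abs_le.mp hxr] : (0:ℝ) ≤ l + r)]
  have habs : ‖(↑l + z : ℂ)‖ = Real.sqrt ((l + z.re)^2 + z.im^2) := by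
    rw [Complex.norm_def, Complex.normSq_apply]
    norm_num [Real.sqrt_eq_iff_eq_sq]
    ring_nf
  rw [habs]
  apply Real.sqrt_le_sqrt
  have h1 : -r ≤ z.re := by linarith [abs_le.mp hxr |>.1]
  have h2 : z.re ≤ r := abs_le.mp hxr |>.2
  nlinarith [sq_nonneg (2*l - r + z.re), sq_nonneg (l + z.re), mul_nonneg hl (by linarith : (0:ℝ) ≤ r + z.re), mul_nonneg hl (by linarith : (0:ℝ) ≤ r - z.re), mul_nonneg (by linarith : (0:ℝ) ≤ r - z.re) (by linarith : (0:ℝ) ≤ r + z.re)]
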